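/- If there exists an (n_1, r_1)-pairs-triples design with 1 ≤ r_1 < n_1 − 1 and an (n_2, r_2)-pairs-triples design with 1 ≤ r_2 < n_2 − 1, then there exists an (n_1·n_2, r_1 + n_1·r_2)-pairs-triples design. -/

import Mathlib

/-- A one-factor on `Fin n`: a perfect matching of the complete graph on `Fin n`,
i.e. a collection of 2-element subsets such that every vertex lies in exactly one
of them. -/
def IsOneFactor (n : ℕ) (T : Set (Finset (Fin n))) : Prop :=
  (∀ p ∈ T, p.card = 2) ∧ ∀ v : Fin n, ∃! p, p ∈ T ∧ v ∈ p

/-- An `(n,r)`-pairs-triples design: `r` pairwise disjoint one-factors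
`T 1, …, T r` on `Fin n` together with a set `R` of triples of `Fin n` such that
every pair of `Fin n` is covered exactly once: either it belongs to exactly one
one-factor and to no triple of `R`, or it belongs to no one-factor and is contained
in exactly one triple of `R`. -/
def IsPairsTriplesDesign (n r : ℕ) (T : Fin r → Set (Finset (Fin n)))
    (R : Set (Finset (Fin n))) : Prop :=
  (∀ i, IsOneFactor n (T i)) ∧
  (∀ i j, i ≠ j → Disjoint (T i) (T j)) ∧
  (∀ b ∈ R, b.card = 3) ∧
  (∀ p : Finset (Fin n), p.card = 2 →
    ((∃! i, p ∈ T i) ∧ ¬∃ b ∈ R, p ⊆ b) ∨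
      ((∀ i, p ∉ T i) ∧ ∃! b, b ∈ R ∧ p ⊆ b))


namespace PTD19

variable {n₁ n₂ : ℕ}

def mk (a : Fin n₁) (c : Fin n₂) : Fin (n₁ * n₂) := finProdFinEquiv (a, c)
def px (u : Fin (n₁ * n₂)) : Fin n₁ := (finProdFinEquiv.symm u).1
def py (u : Fin (n₁ * n₂)) : Fin n₂ := (finProdFinEquiv.symm u).2

@[simp] lemma px_mk (a : Fin n₁) (c : Fin n₂) : px (mk a c) = a := by simp [px, mk]
@[simp] lemma py_mk (a : Fin n₁) (c : Fin n₂) : py (mk a c) = c := by simp [py, mk]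
@[simp] lemma mk_px_py (u : Fin (n₁ * n₂)) : mk (px u) (py u) = u := by
  rw [px, py, mk]
  conv_rhs => rw [← finProdFinEquiv.apply_symm_apply u]

lemma mk_inj {a b : Fin n₁} {c d : Fin n₂} (h : mk a c = mk b d) : a = b ∧ c = d :=
  ⟨by have := congrArg px h; simpa using this, by have := congrArg py h; simpa using this⟩

lemma ext_pt {u v : Fin (n₁ * n₂)} (h1 : px u = px v) (h2 : py u = py v) : u = v := by
  rw [← mk_px_py u, ← mk_px_py v, h1, h2]

lemma mk_left_inj (y : Fin n₂) : Function.Injective (fun a : Fin n₁ => mk a y) :=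
  fun a b h => (mk_inj h).1

lemma exists_other {α : Type*} [DecidableEq α] {P : Finset α} {y : α}
    (h : P.card = 2) (hy : y ∈ P) : ∃ z, z ≠ y ∧ P = {y, z} := by
  obtain ⟨x₁, x₂, hne, rfl⟩ := Finset.card_eq_two.mp h
  simp only [Finset.mem_insert, Finset.mem_singleton] at hy
  rcases hy with rfl | rfl
  · exact ⟨x₂, fun h => hne h.symm, rfl⟩
  · exact ⟨x₁, hne, Finset.pair_comm _ _⟩

lemma eq_pair_of_card_two {α : Type*} [DecidableEq α] {p : Finset α} {a b : α}
    (h : p.card = 2) (ha : a ∈ p) (hb : b ∈ p) (hab : a ≠ b) : p = {a, b} := by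
  refine (Finset.eq_of_subset_of_card_le ?_ ?_).symm
  · intro x hx
    simp only [Finset.mem_insert, Finset.mem_singleton] at hx
    rcases hx with rfl | rfl <;> assumption
  · rw [h, Finset.card_pair hab]

lemma sort3 {t : Finset (Fin n₂)} (h : t.card = 3) :
    ∃ c d e : Fin n₂, c < d ∧ d < e ∧ t = {c, d, e} := by
  obtain ⟨x, y, z, hxy, hxz, hyz, rfl⟩ := Finset.card_eq_three.mp h
  have pe : ∀ p q r : Fin n₂, p ∈ ({x,y,z} : Finset (Fin n₂)) → q ∈ ({x,y,z} : Finset (Fin n₂)) →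
      r ∈ ({x,y,z} : Finset (Fin n₂)) → p ≠ q → p ≠ r → q ≠ r →
      ({x,y,z} : Finset (Fin n₂)) = {p,q,r} := by
    intro p q r hp hq hr h1 h2 h3
    refine (Finset.eq_of_subset_of_card_le ?_ ?_).symm
    · intro w hw
      simp only [Finset.mem_insert, Finset.mem_singleton] at hw
      rcases hw with rfl | rfl | rfl <;> assumption
    · rw [Finset.card_eq_three.mpr ⟨x,y,z,hxy,hxz,hyz,rfl⟩]
      rw [Finset.card_eq_three.mpr ⟨p,q,r,h1,h2,h3,rfl⟩]
  have mx : x ∈ ({x,y,z} : Finset (Fin n₂)) := by simp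
  have my : y ∈ ({x,y,z} : Finset (Fin n₂)) := by simp
  have mz : z ∈ ({x,y,z} : Finset (Fin n₂)) := by simp
  rcases hxy.lt_or_gt with h1 | h1 <;> rcases hxz.lt_or_gt with h2 | h2 <;>
    rcases hyz.lt_or_gt with h3 | h3
  · exact ⟨x, y, z, h1, h3, rfl⟩
  · exact ⟨x, z, y, h2, h3, pe x z y mx mz my hxz hxy (Ne.symm hyz)⟩
  · exact absurd ((h3.trans h2).trans h1) (lt_irrefl y)
  · exact ⟨z, x, y, h2, h1, pe z x y mz mx my (Ne.symm hxz) (Ne.symm hyz) hxy⟩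
  · exact ⟨y, x, z, h1, h2, pe y x z my mx mz (Ne.symm hxy) hyz hxz⟩
  · exact absurd ((h1.trans h2).trans h3) (lt_irrefl y)
  · exact ⟨y, z, x, h3, h2, pe y z x my mz mx hyz (Ne.symm hxy) (Ne.symm hxz)⟩
  · exact ⟨z, y, x, h3, h1, pe z y x mz my mx (Ne.symm hyz) (Ne.symm hxz) (Ne.symm hxy)⟩

lemma sort3_unique {c d e c' d' e' : Fin n₂}
    (h : ({c, d, e} : Finset (Fin n₂)) = {c', d', e'})
    (h1 : c < d) (h2 : d < e) (h3 : c' < d') (h4 : d' < e') :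
    c = c' ∧ d = d' ∧ e = e' := by
  have key : ∀ x : Fin n₂, x ∈ ({c,d,e} : Finset (Fin n₂)) ↔ x ∈ ({c',d',e'} : Finset (Fin n₂)) := by
    rw [h]; intro x; rfl
  have m1 : (c':ℕ) = c ∨ (c':ℕ) = d ∨ (c':ℕ) = e := by
    have := (key c').mpr (by simp)
    simp only [Finset.mem_insert, Finset.mem_singleton] at this
    rcases this with h|h|h <;> simp [h]
  have m2 : (d':ℕ) = c ∨ (d':ℕ) = d ∨ (d':ℕ) = e := by
    have := (key d').mpr (by simp)
    simp only [Finset.mem_insert, Finset.mem_singleton] at this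
    rcases this with h|h|h <;> simp [h]
  have m3 : (e':ℕ) = c ∨ (e':ℕ) = d ∨ (e':ℕ) = e := by
    have := (key e').mpr (by simp)
    simp only [Finset.mem_insert, Finset.mem_singleton] at this
    rcases this with h|h|h <;> simp [h]
  have o1 : (c:ℕ) < d := h1
  have o2 : (d:ℕ) < e := h2
  have o3 : (c':ℕ) < d' := h3
  have o4 : (d':ℕ) < e' := h4
  refine ⟨Fin.ext ?_, Fin.ext ?_, Fin.ext ?_⟩ <;> omega

end PTD19
-- appended to part1 content for testing
namespace PTD19

variable {n₁ n₂ : ℕ}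

/-- Rows: lift a family of subsets of `Fin n₁` to each "row" `y : Fin n₂`. -/
def Rows (A : Set (Finset (Fin n₁))) : Set (Finset (Fin (n₁ * n₂))) :=
  { q | ∃ y : Fin n₂, ∃ p ∈ A, q = p.image (fun a => mk a y) }

lemma mem_rowImage {t : Finset (Fin n₁)} {y : Fin n₂} {v : Fin (n₁ * n₂)} :
    v ∈ t.image (fun a => mk a y) ↔ px v ∈ t ∧ py v = y := by
  simp only [Finset.mem_image]
  constructor
  · rintro ⟨a, ha, rfl⟩; simp [ha]
  · rintro ⟨h1, h2⟩; exact ⟨px v, h1, by rw [h2.symm, mk_px_py]⟩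

lemma Rows_card {A : Set (Finset (Fin n₁))} {m : ℕ} (hA : ∀ p ∈ A, p.card = m)
    {q : Finset (Fin (n₁ * n₂))} (hq : q ∈ Rows A) : q.card = m := by
  obtain ⟨y, p, hp, rfl⟩ := hq
  rw [Finset.card_image_of_injective _ (mk_left_inj y)]
  exact hA p hp

lemma Rows_elim {A : Set (Finset (Fin n₁))} {q : Finset (Fin (n₁ * n₂))} {u : Fin (n₁ * n₂)}
    (hq : q ∈ Rows A) (hu : u ∈ q) :
    ∃ t ∈ A, px u ∈ t ∧ q = t.image (fun a => mk a (py u)) := by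
  obtain ⟨y, t, ht, rfl⟩ := hq
  obtain ⟨h1, h2⟩ := mem_rowImage.mp hu
  exact ⟨t, ht, h1, by rw [h2]⟩

lemma Rows_py_eq {A : Set (Finset (Fin n₁))} {q : Finset (Fin (n₁ * n₂))} {u v : Fin (n₁ * n₂)}
    (hq : q ∈ Rows A) (hu : u ∈ q) (hv : v ∈ q) : py u = py v := by
  obtain ⟨y, t, _, rfl⟩ := hq
  rw [(mem_rowImage.mp hu).2, (mem_rowImage.mp hv).2]

/-- The condition for `u, v` being matched in the cross-matching with offset `k`
relative to the one-factor `S` of `Fin n₂`. -/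
def gcond (S : Set (Finset (Fin n₂))) (k : Fin n₁) (u v : Fin (n₁ * n₂)) : Prop :=
  ({py u, py v} : Finset (Fin n₂)) ∈ S ∧
    (if py u < py v then px v = px u + k else px u = px v + k)

def Gfac (S : Set (Finset (Fin n₂))) (k : Fin n₁) : Set (Finset (Fin (n₁ * n₂))) :=
  { q | ∃ u v, q = {u, v} ∧ gcond S k u v }

lemma gcond_ne {S : Set (Finset (Fin n₂))} (hSc : ∀ p ∈ S, p.card = 2)
    {k : Fin n₁} {u v : Fin (n₁ * n₂)} (h : gcond S k u v) : py u ≠ py v := by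
  intro he
  have := hSc _ h.1
  rw [he] at this
  simp at this

lemma gcond_symm {S : Set (Finset (Fin n₂))} (hSc : ∀ p ∈ S, p.card = 2)
    {k : Fin n₁} {u v : Fin (n₁ * n₂)} (h : gcond S k u v) : gcond S k v u := by
  have hne := gcond_ne hSc h
  obtain ⟨hmem, hcond⟩ := h
  refine ⟨by rwa [Finset.pair_comm], ?_⟩
  rcases hne.lt_or_gt with hlt | hlt
  · rw [if_pos hlt] at hcond
    rw [if_neg (not_lt.mpr hlt.le)]
    exact hcond
  · rw [if_neg (not_lt.mpr hlt.le)] at hcond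
    rw [if_pos hlt]
    exact hcond

lemma Gfac_reps {S : Set (Finset (Fin n₂))} (hSc : ∀ p ∈ S, p.card = 2)
    {k : Fin n₁} {q : Finset (Fin (n₁ * n₂))} (hq : q ∈ Gfac S k) :
    ∃ u v, py u ≠ py v ∧ q = {u, v} ∧ gcond S k u v := by
  obtain ⟨u, v, rfl, hg⟩ := hq
  exact ⟨u, v, gcond_ne hSc hg, rfl, hg⟩

lemma Gfac_elim {S : Set (Finset (Fin n₂))} (hSc : ∀ p ∈ S, p.card = 2)
    {k : Fin n₁} {q : Finset (Fin (n₁ * n₂))} {u v : Fin (n₁ * n₂)}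
    (hq : q ∈ Gfac S k) (hu : u ∈ q) (hv : v ∈ q) (huv : u ≠ v) :
    gcond S k u v ∧ q = {u, v} := by
  obtain ⟨u₀, v₀, _, rfl, hg⟩ := Gfac_reps hSc hq
  simp only [Finset.mem_insert, Finset.mem_singleton] at hu hv
  rcases hu with rfl | rfl <;> rcases hv with rfl | rfl
  · exact absurd rfl huv
  · exact ⟨hg, rfl⟩
  · exact ⟨gcond_symm hSc hg, Finset.pair_comm _ _⟩
  · exact absurd rfl huv

/-- Triples across three rows from a triple of the second design, using the
Latin-square decomposition `a + b + g = 0`. -/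
def RB [NeZero n₁] (R : Set (Finset (Fin n₂))) : Set (Finset (Fin (n₁ * n₂))) :=
  { q | ∃ (c d e : Fin n₂) (a b g : Fin n₁),
      ({c, d, e} : Finset (Fin n₂)) ∈ R ∧ c < d ∧ d < e ∧ a + b + g = 0 ∧
      q = {mk a c, mk b d, mk g e} }

lemma RB_card [NeZero n₁] {R : Set (Finset (Fin n₂))} {q : Finset (Fin (n₁ * n₂))}
    (hq : q ∈ RB R) : q.card = 3 := by
  obtain ⟨c, d, e, a, b, g, _, h1, h2, _, rfl⟩ := hq
  refine Finset.card_eq_three.mpr ⟨_, _, _, ?_, ?_, ?_, rfl⟩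
  · intro h; exact absurd (mk_inj h).2 (ne_of_lt h1)
  · intro h; exact absurd (mk_inj h).2 (ne_of_lt (h1.trans h2))
  · intro h; exact absurd (mk_inj h).2 (ne_of_lt h2)

/-- Every element of an `RB`-triple has its `py` in the source triple. -/
lemma RB_py_mem [NeZero n₁] {c d e : Fin n₂} {a b g : Fin n₁} {u : Fin (n₁ * n₂)}
    (hu : u ∈ ({mk a c, mk b d, mk g e} : Finset (Fin (n₁ * n₂)))) :
    py u ∈ ({c, d, e} : Finset (Fin n₂)) := by
  simp only [Finset.mem_insert, Finset.mem_singleton] at hu ⊢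
  rcases hu with rfl | rfl | rfl <;> simp

end PTD19
namespace PTD19

variable {n₁ n₂ : ℕ}

lemma Rows_isOneFactor {T : Set (Finset (Fin n₁))} (h : IsOneFactor n₁ T) :
    IsOneFactor (n₁ * n₂) (Rows T) := by
  obtain ⟨hc, hv⟩ := h
  constructor
  · intro q hq; exact Rows_card hc hq
  · intro u
    obtain ⟨p, ⟨hp, hup⟩, hpu⟩ := hv (px u)
    refine ⟨p.image (fun a => mk a (py u)), ⟨⟨py u, p, hp, rfl⟩, ?_⟩, ?_⟩
    · exact mem_rowImage.mpr ⟨hup, rfl⟩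
    · rintro q ⟨hq, huq⟩
      obtain ⟨t, ht, hxt, rfl⟩ := Rows_elim hq huq
      rw [hpu t ⟨ht, hxt⟩]

lemma Gfac_isOneFactor [NeZero n₁] {S : Set (Finset (Fin n₂))} (h : IsOneFactor n₂ S)
    (k : Fin n₁) : IsOneFactor (n₁ * n₂) (Gfac S k) := by
  obtain ⟨hc, hv⟩ := h
  constructor
  · rintro q ⟨u, v, rfl, hg⟩
    exact Finset.card_pair (fun he => (gcond_ne hc hg) (by rw [he]))
  · intro w
    obtain ⟨P, ⟨hP, hwP⟩, hPu⟩ := hv (py w)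
    obtain ⟨z, hz, hPz⟩ := exists_other (hc P hP) hwP
    set v₀ : Fin (n₁ * n₂) := if py w < z then mk (px w + k) z else mk (px w - k) z with hv₀
    have hpyv₀ : py v₀ = z := by
      rw [hv₀]; split <;> simp
    have hg : gcond S k w v₀ := by
      constructor
      · rw [hpyv₀, ← hPz]; exact hP
      · rw [hpyv₀]
        by_cases hlt : py w < z
        · rw [if_pos hlt, hv₀, if_pos hlt, px_mk]
        · rw [if_neg hlt, hv₀, if_neg hlt, px_mk, sub_add_cancel]
    refine ⟨{w, v₀}, ⟨⟨w, v₀, rfl, hg⟩, by simp⟩, ?_⟩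
    rintro q ⟨⟨u', w', rfl, hg'⟩, hwq⟩
    have key : ∀ u v : Fin (n₁ * n₂), gcond S k u v → w = u →
        ({u, v} : Finset (Fin (n₁ * n₂))) = {w, v₀} := by
      rintro u v hguv rfl
      have hne := gcond_ne hc hguv
      have hPeq : ({py w, py v} : Finset (Fin n₂)) = P := hPu _ ⟨hguv.1, by simp⟩
      have hpyv : py v = z := by
        have : py v ∈ ({py w, z} : Finset (Fin n₂)) := by
          rw [← hPz, ← hPeq]; simp
        simp only [Finset.mem_insert, Finset.mem_singleton] at this
        rcases this with h | h
        · exact absurd h.symm hne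
        · exact h
      have hveq : v = v₀ := by
        have hcond := hguv.2
        rw [hpyv] at hcond
        by_cases hlt : py w < z
        · rw [if_pos hlt] at hcond
          rw [hv₀, if_pos hlt]
          rw [← hcond, ← hpyv, mk_px_py]
        · rw [if_neg hlt] at hcond
          rw [hv₀, if_neg hlt]
          have hx : px v = px w - k := eq_sub_of_add_eq hcond.symm
          rw [← hx, ← hpyv, mk_px_py]
      rw [hveq]
    simp only [Finset.mem_insert, Finset.mem_singleton] at hwq
    rcases hwq with rfl | rfl
    · exact key _ _ hg' rfl
    · rw [Finset.pair_comm]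
      exact key _ _ (gcond_symm hc hg') rfl

end PTD19

namespace PTD19

variable {n₁ n₂ : ℕ}

lemma gcond_k_eq [NeZero n₁] {S S' : Set (Finset (Fin n₂))} {k k' : Fin n₁}
    {u v : Fin (n₁ * n₂)} (h : gcond S k u v) (h' : gcond S' k' u v) : k = k' := by
  obtain ⟨-, h2⟩ := h
  obtain ⟨-, h2'⟩ := h'
  by_cases hlt : py u < py v
  · rw [if_pos hlt] at h2 h2'
    exact add_left_cancel (h2.symm.trans h2')
  · rw [if_neg hlt] at h2 h2'
    exact add_left_cancel (h2.symm.trans h2')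

lemma existsUnique_symm {α β : Sort*} (f : α ≃ β) {Q : α → Prop} (h : ∃! a, Q a) :
    ∃! b, Q (f.symm b) := by
  obtain ⟨a, ha, hu⟩ := h
  refine ⟨f a, by simpa using ha, fun b hb => ?_⟩
  have hb' := hu _ hb
  rw [← hb']
  simp

end PTD19

namespace PTD19

variable {n₁ n₂ : ℕ}

def TsDef {r₁ r₂ : ℕ} (T₁ : Fin r₁ → Set (Finset (Fin n₁)))
    (T₂ : Fin r₂ → Set (Finset (Fin n₂))) :
    (Fin r₁ ⊕ Fin n₁ × Fin r₂) → Set (Finset (Fin (n₁ * n₂))) :=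
  Sum.elim (fun i => Rows (T₁ i)) (fun kj => Gfac (T₂ kj.2) kj.1)

end PTD19

open PTD19 in
theorem stmt19 {n₁ r₁ n₂ r₂ : ℕ} (hr₁ : 1 ≤ r₁) (hr₁' : r₁ < n₁ - 1)
    (hr₂ : 1 ≤ r₂) (hr₂' : r₂ < n₂ - 1)
    (h₁ : ∃ (T : Fin r₁ → Set (Finset (Fin n₁))) (R : Set (Finset (Fin n₁))),
        IsPairsTriplesDesign n₁ r₁ T R)
    (h₂ : ∃ (T : Fin r₂ → Set (Finset (Fin n₂))) (R : Set (Finset (Fin n₂))),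
        IsPairsTriplesDesign n₂ r₂ T R) :
    ∃ (T' : Fin (r₁ + n₁ * r₂) → Set (Finset (Fin (n₁ * n₂))))
      (R' : Set (Finset (Fin (n₁ * n₂)))),
      IsPairsTriplesDesign (n₁ * n₂) (r₁ + n₁ * r₂) T' R' := by
  classical
  obtain ⟨T₁, R₁, hT1f, hT1d, hR1c, hcov1⟩ := h₁
  obtain ⟨T₂, R₂, hT2f, hT2d, hR2c, hcov2⟩ := h₂
  haveI : NeZero n₁ := ⟨by omega⟩
  letI : CommRing (Fin n₁) := Fin.instCommRing n₁
  let E : (Fin r₁ ⊕ Fin n₁ × Fin r₂) ≃ Fin (r₁ + n₁ * r₂) :=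
    (Equiv.sumCongr (Equiv.refl (Fin r₁)) finProdFinEquiv).trans finSumFinEquiv
  refine ⟨fun i => TsDef T₁ T₂ (E.symm i), Rows R₁ ∪ RB R₂, ?_, ?_, ?_, ?_⟩
  · -- each is a one-factor
    intro i
    show IsOneFactor (n₁ * n₂) (TsDef T₁ T₂ (E.symm i))
    rcases E.symm i with i' | ⟨k, j⟩
    · exact Rows_isOneFactor (n₂ := n₂) (hT1f i')
    · exact Gfac_isOneFactor (hT2f j) k
  · -- pairwise disjoint
    have TsDisj : ∀ s t, s ≠ t → Disjoint (TsDef T₁ T₂ s) (TsDef T₁ T₂ t) := by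
      rintro (i | ⟨k, j⟩) (i' | ⟨k', j'⟩) hst
      · have hii : i ≠ i' := fun h => hst (by rw [h])
        rw [Set.disjoint_left]
        intro q hq hq'
        have hne : q.Nonempty := by
          rw [← Finset.card_pos, Rows_card (hT1f i).1 hq]
          norm_num
        obtain ⟨u, hu⟩ := hne
        obtain ⟨t1, ht1, _, hq1⟩ := Rows_elim hq hu
        obtain ⟨t2, ht2, _, hq2⟩ := Rows_elim hq' hu
        have ht12 : t1 = t2 :=
          Finset.image_injective (mk_left_inj (py u)) (hq1.symm.trans hq2)
        exact Set.disjoint_left.mp (hT1d i i' hii) ht1 (ht12 ▸ ht2)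
      · rw [Set.disjoint_left]
        intro q hq hq'
        obtain ⟨u, v, hpy, rfl, -⟩ := Gfac_reps (hT2f j').1 hq'
        exact hpy (Rows_py_eq hq (by simp) (by simp))
      · rw [Set.disjoint_left]
        intro q hq hq'
        obtain ⟨u, v, hpy, rfl, -⟩ := Gfac_reps (hT2f j).1 hq
        exact hpy (Rows_py_eq hq' (by simp) (by simp))
      · rw [Set.disjoint_left]
        intro q hq hq'
        obtain ⟨u, v, hpy, rfl, hg⟩ := Gfac_reps (hT2f j).1 hq
        have huv : u ≠ v := fun h => hpy (by rw [h])
        obtain ⟨hg', -⟩ := Gfac_elim (hT2f j').1 hq' (by simp) (by simp) huv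
        have hjj : j = j' := by
          by_contra hne
          exact Set.disjoint_left.mp (hT2d j j' hne) hg.1 hg'.1
        have hkk : k = k' := gcond_k_eq hg hg'
        exact hst (by rw [hjj, hkk])
    intro i j hij
    exact TsDisj _ _ (fun h => hij (by simpa using congrArg E h))
  · -- triples have card 3
    rintro b (hb | hb)
    · exact Rows_card hR1c hb
    · exact RB_card hb
  · -- coverage
    intro p hp
    obtain ⟨u, v, huv, rfl⟩ := Finset.card_eq_two.mp hp
        -- abbreviation for the union of triples
    have noG : ∀ (w x : Fin (n₁ * n₂)) (k : Fin n₁) (j : Fin r₂), py w = py x →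
        ({w, x} : Finset (Fin (n₁ * n₂))) ∉ Gfac (T₂ j) k := by
      intro w x k j hwx hmem
      obtain ⟨u₀, v₀, hpy₀, heq, -⟩ := Gfac_reps (hT2f j).1 hmem
      have h₀ : u₀ ∈ ({w, x} : Finset (Fin (n₁ * n₂))) := by rw [heq]; simp
      have h₁ : v₀ ∈ ({w, x} : Finset (Fin (n₁ * n₂))) := by rw [heq]; simp
      simp only [Finset.mem_insert, Finset.mem_singleton] at h₀ h₁
      rcases h₀ with rfl | rfl <;> rcases h₁ with rfl | rfl
      · exact hpy₀ rfl
      · exact hpy₀ hwx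
      · exact hpy₀ hwx.symm
      · exact hpy₀ rfl
    have noRB : ∀ (w x : Fin (n₁ * n₂)), w ≠ x → py w = py x → ∀ b ∈ RB R₂,
        ¬ ({w, x} : Finset (Fin (n₁ * n₂))) ⊆ b := by
      rintro w x hwx hpy b ⟨c, d, e, a2, b2, g2, hR, h1, h2, hsum, rfl⟩ hsub
      have hu' := hsub (show w ∈ ({w, x} : Finset (Fin (n₁ * n₂))) by simp)
      have hv' := hsub (show x ∈ ({w, x} : Finset (Fin (n₁ * n₂))) by simp)
      simp only [Finset.mem_insert, Finset.mem_singleton] at hu' hv'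
      rcases hu' with rfl | rfl | rfl <;> rcases hv' with rfl | rfl | rfl <;>
        simp only [py_mk] at hpy
      · exact hwx rfl
      · exact absurd hpy (ne_of_lt h1)
      · exact absurd hpy (ne_of_lt (h1.trans h2))
      · exact absurd hpy (ne_of_gt h1)
      · exact hwx rfl
      · exact absurd hpy (ne_of_lt h2)
      · exact absurd hpy (ne_of_gt (h1.trans h2))
      · exact absurd hpy (ne_of_gt h2)
      · exact hwx rfl
    have main1 : ∀ w x : Fin (n₁ * n₂), w ≠ x → py w = py x →
        ((∃! s, ({w, x} : Finset (Fin (n₁ * n₂))) ∈ TsDef T₁ T₂ s) ∧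
          ¬∃ b ∈ Rows R₁ ∪ RB R₂, ({w, x} : Finset (Fin (n₁ * n₂))) ⊆ b) ∨
        ((∀ s, ({w, x} : Finset (Fin (n₁ * n₂))) ∉ TsDef T₁ T₂ s) ∧
          ∃! b, b ∈ Rows R₁ ∪ RB R₂ ∧ ({w, x} : Finset (Fin (n₁ * n₂))) ⊆ b) := by
      intro w x hwx hcd
      have hab : px w ≠ px x := fun h => hwx (ext_pt h hcd)
      have hmwx : ∀ t : Finset (Fin n₁), px w ∈ t → px x ∈ t →
          ({px w, px x} : Finset (Fin n₁)) ⊆ t := by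
        intro t h1 h2 y hy
        simp only [Finset.mem_insert, Finset.mem_singleton] at hy
        rcases hy with rfl | rfl <;> assumption
      rcases hcov1 {px w, px x} (Finset.card_pair hab) with ⟨⟨i, hi, hiu⟩, hnt⟩ |
        ⟨hnf, ⟨t, ⟨htR, hts⟩, htu⟩⟩
      · left
        constructor
        · refine ⟨Sum.inl i, ?_, ?_⟩
          · show ({w, x} : Finset (Fin (n₁ * n₂))) ∈ Rows (T₁ i)
            refine ⟨py w, {px w, px x}, hi, ?_⟩
            rw [Finset.image_insert, Finset.image_singleton, mk_px_py]
            have hx2 : mk (px x) (py w) = x := by rw [hcd, mk_px_py]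
            rw [hx2]
          · rintro (i' | ⟨k, j⟩) hs
            · obtain ⟨t, ht', hxt, hqe⟩ := Rows_elim hs
                (show w ∈ ({w, x} : Finset (Fin (n₁ * n₂))) by simp)
              have hvx : px x ∈ t := (mem_rowImage.mp
                (hqe ▸ (show x ∈ ({w, x} : Finset (Fin (n₁ * n₂))) by simp))).1
              have ht2 : t = {px w, px x} :=
                eq_pair_of_card_two ((hT1f i').1 t ht') hxt hvx hab
              rw [hiu i' (ht2 ▸ ht')]
            · exact absurd hs (noG w x k j hcd)
        · rintro ⟨b, hb | hb, hsub⟩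
          · obtain ⟨t, ht', hxt, hqe⟩ := Rows_elim hb (hsub (show w ∈ ({w, x} : Finset (Fin (n₁ * n₂))) by simp))
            have hvx : px x ∈ t := (mem_rowImage.mp (hqe ▸ hsub
              (show x ∈ ({w, x} : Finset (Fin (n₁ * n₂))) by simp))).1
            exact hnt ⟨t, ht', hmwx t hxt hvx⟩
          · exact noRB w x hwx hcd b hb hsub
      · right
        have hxu : px w ∈ t := hts (by simp)
        have hxv : px x ∈ t := hts (by simp)
        constructor
        · rintro (i' | ⟨k, j⟩) hs
          · obtain ⟨t', ht', hxt, hqe⟩ := Rows_elim hs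
              (show w ∈ ({w, x} : Finset (Fin (n₁ * n₂))) by simp)
            have hvx : px x ∈ t' := (mem_rowImage.mp (hqe ▸
              (show x ∈ ({w, x} : Finset (Fin (n₁ * n₂))) by simp))).1
            have ht2 : t' = {px w, px x} :=
              eq_pair_of_card_two ((hT1f i').1 t' ht') hxt hvx hab
            exact hnf i' (ht2 ▸ ht')
          · exact noG w x k j hcd hs
        · refine ⟨t.image (fun a => mk a (py w)), ⟨Or.inl ⟨py w, t, htR, rfl⟩, ?_⟩, ?_⟩
          · intro z hz
            simp only [Finset.mem_insert, Finset.mem_singleton] at hz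
            rcases hz with rfl | rfl
            · exact mem_rowImage.mpr ⟨hxu, rfl⟩
            · exact mem_rowImage.mpr ⟨hxv, hcd.symm⟩
          · rintro b ⟨hb | hb, hsub⟩
            · obtain ⟨t', ht', hxt, hqe⟩ := Rows_elim hb (hsub (show w ∈ ({w, x} : Finset (Fin (n₁ * n₂))) by simp))
              have hvx : px x ∈ t' := (mem_rowImage.mp (hqe ▸ hsub
                (show x ∈ ({w, x} : Finset (Fin (n₁ * n₂))) by simp))).1
              have ht2 : t' = t := htu t' ⟨ht', hmwx t' hxt hvx⟩
              rw [hqe, ht2]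
            · exact absurd hsub (noRB w x hwx hcd b hb)
    have main2 : ∀ w x : Fin (n₁ * n₂), py w < py x →
        ((∃! s, ({w, x} : Finset (Fin (n₁ * n₂))) ∈ TsDef T₁ T₂ s) ∧
          ¬∃ b ∈ Rows R₁ ∪ RB R₂, ({w, x} : Finset (Fin (n₁ * n₂))) ⊆ b) ∨
        ((∀ s, ({w, x} : Finset (Fin (n₁ * n₂))) ∉ TsDef T₁ T₂ s) ∧
          ∃! b, b ∈ Rows R₁ ∪ RB R₂ ∧ ({w, x} : Finset (Fin (n₁ * n₂))) ⊆ b) := by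
      intro w x hlt
      have hcd' : py w ≠ py x := ne_of_lt hlt
      have hwx : w ≠ x := fun h => hcd' (by rw [h])
      have hsub2 : ∀ t : Finset (Fin n₂), py w ∈ t → py x ∈ t →
          ({py w, py x} : Finset (Fin n₂)) ⊆ t := by
        intro t h1 h2 z hz
        simp only [Finset.mem_insert, Finset.mem_singleton] at hz
        rcases hz with rfl | rfl <;> assumption
      rcases hcov2 {py w, py x} (Finset.card_pair hcd') with ⟨⟨j, hj, hju⟩, hnt⟩ |
        ⟨hnf, ⟨t, ⟨htR, hts⟩, htu⟩⟩
      · left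
        constructor
        · refine ⟨Sum.inr (px x - px w, j), ?_, ?_⟩
          · show ({w, x} : Finset (Fin (n₁ * n₂))) ∈ Gfac (T₂ j) (px x - px w)
            refine ⟨w, x, rfl, hj, ?_⟩
            rw [if_pos hlt]
            ring
          · rintro (i' | ⟨k, j'⟩) hs
            · exact absurd (Rows_py_eq hs (by simp) (by simp)) hcd'
            · obtain ⟨hg, -⟩ := Gfac_elim (hT2f j').1 hs (by simp) (by simp) hwx
              have hj' : j' = j := hju j' hg.1
              have hk : k = px x - px w := by
                have h2 := hg.2
                rw [if_pos hlt] at h2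
                exact eq_sub_of_add_eq' h2.symm
              rw [hj', hk]
        · rintro ⟨b, hb | hb, hsub⟩
          · exact hcd' (Rows_py_eq hb (hsub (show w ∈ ({w, x} : Finset _) by simp))
              (hsub (show x ∈ ({w, x} : Finset _) by simp)))
          · obtain ⟨c, d, e, a2, b2, g2, hR, h1, h2, hsum, rfl⟩ := hb
            have hyu := RB_py_mem (hsub (show w ∈ ({w, x} : Finset _) by simp))
            have hyv := RB_py_mem (hsub (show x ∈ ({w, x} : Finset _) by simp))
            exact hnt ⟨{c, d, e}, hR, hsub2 _ hyu hyv⟩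
      · right
        constructor
        · rintro (i' | ⟨k, j'⟩) hs
          · exact hcd' (Rows_py_eq hs (by simp) (by simp))
          · obtain ⟨hg, -⟩ := Gfac_elim (hT2f j').1 hs (by simp) (by simp) hwx
            exact hnf j' hg.1
        · obtain ⟨c, d, e, h1, h2, hte⟩ := sort3 (hR2c t htR)
          subst hte
          have hmu : py w ∈ ({c, d, e} : Finset (Fin n₂)) := hts (by simp)
          have hmv : py x ∈ ({c, d, e} : Finset (Fin n₂)) := hts (by simp)
          simp only [Finset.mem_insert, Finset.mem_singleton] at hmu hmv
          rcases hmu with hu1 | hu1 | hu1 <;> rcases hmv with hv1 | hv1 | hv1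
          · exact absurd (hu1.trans hv1.symm) hcd'
          · -- py w = c, py x = d
            have hw' : mk (px w) c = w := by rw [← hu1, mk_px_py]
            have hx' : mk (px x) d = x := by rw [← hv1, mk_px_py]
            refine ⟨{mk (px w) c, mk (px x) d, mk (-(px w) - px x) e},
              ⟨Or.inr ⟨c, d, e, px w, px x, -(px w) - px x, htR, h1, h2, by ring, rfl⟩, ?_⟩, ?_⟩
            · intro z hz
              simp only [Finset.mem_insert, Finset.mem_singleton] at hz ⊢
              rcases hz with rfl | rfl
              · exact Or.inl hw'.symm
              · exact Or.inr (Or.inl hx'.symm)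
            · rintro b ⟨hb | hb, hsub⟩
              · exact absurd (Rows_py_eq hb (hsub (show w ∈ ({w, x} : Finset _) by simp))
                  (hsub (show x ∈ ({w, x} : Finset _) by simp))) hcd'
              · obtain ⟨c2, d2, e2, a2, b2, g2, hR2, h12, h22, hsum2, rfl⟩ := hb
                have hyu := RB_py_mem (hsub (show w ∈ ({w, x} : Finset _) by simp))
                have hyv := RB_py_mem (hsub (show x ∈ ({w, x} : Finset _) by simp))
                obtain ⟨rfl, rfl, rfl⟩ : c2 = c ∧ d2 = d ∧ e2 = e :=
                  sort3_unique (htu _ ⟨hR2, hsub2 _ hyu hyv⟩) h12 h22 h1 h2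
                have hmem1 := hsub (show w ∈ ({w, x} : Finset _) by simp)
                have hmem2 := hsub (show x ∈ ({w, x} : Finset _) by simp)
                simp only [Finset.mem_insert, Finset.mem_singleton] at hmem1 hmem2
                have ha2 : a2 = px w := by
                  rcases hmem1 with h | h | h
                  · rw [h, px_mk]
                  · rw [h, py_mk] at hu1
                    exact absurd hu1 (ne_of_gt h1)
                  · rw [h, py_mk] at hu1
                    exact absurd hu1 (ne_of_gt (h1.trans h2))
                have hb2 : b2 = px x := by
                  rcases hmem2 with h | h | h
                  · rw [h, py_mk] at hv1
                    exact absurd hv1 (ne_of_lt h1)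
                  · rw [h, px_mk]
                  · rw [h, py_mk] at hv1
                    exact absurd hv1 (ne_of_gt h2)
                have hg2 : g2 = -(px w) - px x := by
                  rw [ha2, hb2] at hsum2
                  linear_combination hsum2
                rw [ha2, hb2, hg2]
          · -- py w = c, py x = e
            have hw' : mk (px w) c = w := by rw [← hu1, mk_px_py]
            have hx' : mk (px x) e = x := by rw [← hv1, mk_px_py]
            refine ⟨{mk (px w) c, mk (-(px w) - px x) d, mk (px x) e},
              ⟨Or.inr ⟨c, d, e, px w, -(px w) - px x, px x, htR, h1, h2, by ring, rfl⟩, ?_⟩, ?_⟩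
            · intro z hz
              simp only [Finset.mem_insert, Finset.mem_singleton] at hz ⊢
              rcases hz with rfl | rfl
              · exact Or.inl hw'.symm
              · exact Or.inr (Or.inr hx'.symm)
            · rintro b ⟨hb | hb, hsub⟩
              · exact absurd (Rows_py_eq hb (hsub (show w ∈ ({w, x} : Finset _) by simp))
                  (hsub (show x ∈ ({w, x} : Finset _) by simp))) hcd'
              · obtain ⟨c2, d2, e2, a2, b2, g2, hR2, h12, h22, hsum2, rfl⟩ := hb
                have hyu := RB_py_mem (hsub (show w ∈ ({w, x} : Finset _) by simp))
                have hyv := RB_py_mem (hsub (show x ∈ ({w, x} : Finset _) by simp))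
                obtain ⟨rfl, rfl, rfl⟩ : c2 = c ∧ d2 = d ∧ e2 = e :=
                  sort3_unique (htu _ ⟨hR2, hsub2 _ hyu hyv⟩) h12 h22 h1 h2
                have hmem1 := hsub (show w ∈ ({w, x} : Finset _) by simp)
                have hmem2 := hsub (show x ∈ ({w, x} : Finset _) by simp)
                simp only [Finset.mem_insert, Finset.mem_singleton] at hmem1 hmem2
                have ha2 : a2 = px w := by
                  rcases hmem1 with h | h | h
                  · rw [h, px_mk]
                  · rw [h, py_mk] at hu1
                    exact absurd hu1 (ne_of_gt h1)
                  · rw [h, py_mk] at hu1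
                    exact absurd hu1 (ne_of_gt (h1.trans h2))
                have hg2 : g2 = px x := by
                  rcases hmem2 with h | h | h
                  · rw [h, py_mk] at hv1
                    exact absurd hv1 (ne_of_lt (h1.trans h2))
                  · rw [h, py_mk] at hv1
                    exact absurd hv1 (ne_of_lt h2)
                  · rw [h, px_mk]
                have hb2 : b2 = -(px w) - px x := by
                  rw [ha2, hg2] at hsum2
                  linear_combination hsum2
                rw [ha2, hb2, hg2]
          · rw [hu1, hv1] at hlt
            exact absurd hlt (lt_asymm h1)
          · exact absurd (hu1.trans hv1.symm) hcd'
          · -- py w = d, py x = e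
            have hw' : mk (px w) d = w := by rw [← hu1, mk_px_py]
            have hx' : mk (px x) e = x := by rw [← hv1, mk_px_py]
            refine ⟨{mk (-(px w) - px x) c, mk (px w) d, mk (px x) e},
              ⟨Or.inr ⟨c, d, e, -(px w) - px x, px w, px x, htR, h1, h2, by ring, rfl⟩, ?_⟩, ?_⟩
            · intro z hz
              simp only [Finset.mem_insert, Finset.mem_singleton] at hz ⊢
              rcases hz with rfl | rfl
              · exact Or.inr (Or.inl hw'.symm)
              · exact Or.inr (Or.inr hx'.symm)
            · rintro b ⟨hb | hb, hsub⟩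
              · exact absurd (Rows_py_eq hb (hsub (show w ∈ ({w, x} : Finset _) by simp))
                  (hsub (show x ∈ ({w, x} : Finset _) by simp))) hcd'
              · obtain ⟨c2, d2, e2, a2, b2, g2, hR2, h12, h22, hsum2, rfl⟩ := hb
                have hyu := RB_py_mem (hsub (show w ∈ ({w, x} : Finset _) by simp))
                have hyv := RB_py_mem (hsub (show x ∈ ({w, x} : Finset _) by simp))
                obtain ⟨rfl, rfl, rfl⟩ : c2 = c ∧ d2 = d ∧ e2 = e :=
                  sort3_unique (htu _ ⟨hR2, hsub2 _ hyu hyv⟩) h12 h22 h1 h2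
                have hmem1 := hsub (show w ∈ ({w, x} : Finset _) by simp)
                have hmem2 := hsub (show x ∈ ({w, x} : Finset _) by simp)
                simp only [Finset.mem_insert, Finset.mem_singleton] at hmem1 hmem2
                have hb2 : b2 = px w := by
                  rcases hmem1 with h | h | h
                  · rw [h, py_mk] at hu1
                    exact absurd hu1 (ne_of_lt h1)
                  · rw [h, px_mk]
                  · rw [h, py_mk] at hu1
                    exact absurd hu1 (ne_of_gt h2)
                have hg2 : g2 = px x := by
                  rcases hmem2 with h | h | h
                  · rw [h, py_mk] at hv1
                    exact absurd hv1 (ne_of_lt (h1.trans h2))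
                  · rw [h, py_mk] at hv1
                    exact absurd hv1 (ne_of_lt h2)
                  · rw [h, px_mk]
                have ha2 : a2 = -(px w) - px x := by
                  rw [hb2, hg2] at hsum2
                  linear_combination hsum2
                rw [ha2, hb2, hg2]
          · rw [hu1, hv1] at hlt
            exact absurd hlt (lt_asymm (h1.trans h2))
          · rw [hu1, hv1] at hlt
            exact absurd hlt (lt_asymm h2)
          · exact absurd (hu1.trans hv1.symm) hcd'
    have conv : ∀ w x : Fin (n₁ * n₂),
        (((∃! s, ({w, x} : Finset (Fin (n₁ * n₂))) ∈ TsDef T₁ T₂ s) ∧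
          ¬∃ b ∈ Rows R₁ ∪ RB R₂, ({w, x} : Finset (Fin (n₁ * n₂))) ⊆ b) ∨
         ((∀ s, ({w, x} : Finset (Fin (n₁ * n₂))) ∉ TsDef T₁ T₂ s) ∧
          ∃! b, b ∈ Rows R₁ ∪ RB R₂ ∧ ({w, x} : Finset (Fin (n₁ * n₂))) ⊆ b)) →
        (((∃! i : Fin (r₁ + n₁ * r₂), ({w, x} : Finset (Fin (n₁ * n₂))) ∈ TsDef T₁ T₂ (E.symm i)) ∧
          ¬∃ b ∈ Rows R₁ ∪ RB R₂, ({w, x} : Finset (Fin (n₁ * n₂))) ⊆ b) ∨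
         ((∀ i : Fin (r₁ + n₁ * r₂), ({w, x} : Finset (Fin (n₁ * n₂))) ∉ TsDef T₁ T₂ (E.symm i)) ∧
          ∃! b, b ∈ Rows R₁ ∪ RB R₂ ∧ ({w, x} : Finset (Fin (n₁ * n₂))) ⊆ b)) := by
      rintro w x (⟨a1, a2⟩ | ⟨a1, a2⟩)
      · exact Or.inl ⟨existsUnique_symm E a1, a2⟩
      · exact Or.inr ⟨fun i => a1 (E.symm i), a2⟩
    by_cases hcd : py u = py v
    · exact conv u v (main1 u v huv hcd)
    · rcases (Ne.lt_or_gt hcd) with h | h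
      · exact conv u v (main2 u v h)
      · rw [Finset.pair_comm]
        exact conv v u (main2 v u h)
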